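/- arXiv:1503.05177 — 4 statements merged into one kernel-verified Lean document; each statement's English description precedes it below -/
import Mathlib

section
/- Let M be a matroid on [n] with Orlik-Solomon algebra A(M) = E/I over a field 𝕜, where E is the exterior algebra on generators e₁,…,eₙ and I is generated by ∂(e_C) over circuits C of M, with ∂ the derivation sending each eᵢ to 1. Let Ā(M) be the subalgebra of A(M) generated by V̄ = {v ∈ 𝕜ⁿ : Σᵢ vᵢ = 0}. Then Ā(M) equals the kernel of the induced derivation ∂ on A(M). -/
open ExteriorAlgebra

/-- A circuit of a matroid: a minimal dependent set. -/
def IsCircuit {α : Type*} (M : Matroid α) (C : Set α) : Prop :=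
  M.Dep C ∧ ∀ D ⊂ C, ¬ M.Dep D

/-- The exterior algebra `E = Λ(𝕜^α)`. -/
abbrev Ex (𝕜 : Type) [Field 𝕜] (α : Type) := ExteriorAlgebra 𝕜 (α → 𝕜)

/-- The distinguished degree-one generators `e_i` of the exterior algebra. -/
noncomputable def gen (𝕜 : Type) [Field 𝕜] {α : Type} [DecidableEq α] (i : α) : Ex 𝕜 α :=
  ι 𝕜 (Pi.single i (1 : 𝕜))

/-- The derivation `∂` on the exterior algebra with `∂ e_i = 1` for all `i`
(contraction against the linear functional `v ↦ Σᵢ vᵢ`). -/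
noncomputable def osd (𝕜 : Type) [Field 𝕜] {α : Type} [Fintype α] :
    Ex 𝕜 α →ₗ[𝕜] Ex 𝕜 α :=
  CliffordAlgebra.contractLeft (Q := (0 : QuadraticForm 𝕜 (α → 𝕜)))
    (∑ i, LinearMap.proj i)

/-- The monomial `e_C = ∏_{i ∈ C} e_i`, indices in increasing order. -/
noncomputable def eProd (𝕜 : Type) [Field 𝕜] {α : Type} [DecidableEq α] [LinearOrder α]
    (C : Finset α) : Ex 𝕜 α :=
  ((C.sort (· ≤ ·)).map (gen 𝕜)).prod

/-- The relations `∂ e_C = 0` (for circuits `C`) defining the Orlik-Solomon algebra. -/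
inductive osRel (𝕜 : Type) [Field 𝕜] {α : Type} [Fintype α] [LinearOrder α]
    (M : Matroid α) : Ex 𝕜 α → Ex 𝕜 α → Prop
  | mk (C : Finset α) : IsCircuit M (C : Set α) → osRel 𝕜 M (osd 𝕜 (eProd 𝕜 C)) 0

/-- The Orlik-Solomon algebra `A(M) = E/I(M)`. -/
abbrev OS (𝕜 : Type) [Field 𝕜] {α : Type} [Fintype α] [LinearOrder α] (M : Matroid α) :=
  RingQuot (osRel 𝕜 M)

/-- The quotient map `E → A(M)`. -/
noncomputable def osπ (𝕜 : Type) [Field 𝕜] {α : Type} [Fintype α] [LinearOrder α]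
    (M : Matroid α) : Ex 𝕜 α →ₐ[𝕜] OS 𝕜 M :=
  RingQuot.mkAlgHom 𝕜 (osRel 𝕜 M)

/-- The degree-`p` graded piece `A^p(M)` of the Orlik-Solomon algebra. -/
noncomputable def osPow (𝕜 : Type) [Field 𝕜] {α : Type} [Fintype α] [LinearOrder α]
    (M : Matroid α) (p : ℕ) : Submodule 𝕜 (OS 𝕜 M) :=
  Submodule.map (osπ 𝕜 M).toLinearMap
    ((LinearMap.range (ι 𝕜 : (α → 𝕜) →ₗ[𝕜] Ex 𝕜 α)) ^ p)

/-- The graded piece one lower, `A^{p-1}(M)` (zero when `p = 0`). -/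
noncomputable def osLowPow (𝕜 : Type) [Field 𝕜] {α : Type} [Fintype α] [LinearOrder α]
    (M : Matroid α) : ℕ → Submodule 𝕜 (OS 𝕜 M)
  | 0 => ⊥
  | (q + 1) => osPow 𝕜 M q

/-- The image of `v ∈ 𝕜^α` in `A¹(M)`. -/
noncomputable def osv (𝕜 : Type) [Field 𝕜] {α : Type} [Fintype α] [LinearOrder α]
    (M : Matroid α) (v : α → 𝕜) : OS 𝕜 M :=
  osπ 𝕜 M (ι 𝕜 v)

/-- The `p`-cocycles of the complex `(A(M), ·v)`. -/
noncomputable def osCocycles (𝕜 : Type) [Field 𝕜] {α : Type} [Fintype α] [LinearOrder α]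
    (M : Matroid α) (p : ℕ) (v : α → 𝕜) : Submodule 𝕜 (OS 𝕜 M) :=
  osPow 𝕜 M p ⊓ LinearMap.ker (LinearMap.mulRight 𝕜 (osv 𝕜 M v))

/-- The `p`-coboundaries of the complex `(A(M), ·v)`. -/
noncomputable def osCobound (𝕜 : Type) [Field 𝕜] {α : Type} [Fintype α] [LinearOrder α]
    (M : Matroid α) (p : ℕ) (v : α → 𝕜) : Submodule 𝕜 (OS 𝕜 M) :=
  Submodule.map (LinearMap.mulRight 𝕜 (osv 𝕜 M v)) (osLowPow 𝕜 M p)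

/-- `H^p(A(M), ·v) ≠ 0`, i.e. `v` lies in the resonance variety `ℛ^p(A(M))`. -/
def osResonates (𝕜 : Type) [Field 𝕜] {α : Type} [Fintype α] [LinearOrder α]
    (M : Matroid α) (p : ℕ) (v : α → 𝕜) : Prop :=
  ¬ (osCocycles 𝕜 M p v ≤ osCobound 𝕜 M p v)

/-- `dim_𝕜 H^p(A(M), ·v)`. -/
noncomputable def osCohomDim (𝕜 : Type) [Field 𝕜] {α : Type} [Fintype α] [LinearOrder α]
    (M : Matroid α) (p : ℕ) (v : α → 𝕜) : ℕ :=
  Module.finrank 𝕜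
    (↥(osCocycles 𝕜 M p v) ⧸
      ((osCobound 𝕜 M p v).comap (osCocycles 𝕜 M p v).subtype))

/-- The projective Orlik-Solomon algebra `Ā(M)`: the subalgebra of `A(M)` generated by
(the image of) `V̄ = {v : Σᵢ vᵢ = 0}`. -/
noncomputable def osBar (𝕜 : Type) [Field 𝕜] {α : Type} [Fintype α] [LinearOrder α]
    (M : Matroid α) : Subalgebra 𝕜 (OS 𝕜 M) :=
  Algebra.adjoin 𝕜 ((fun v => osv 𝕜 M v) '' {v | ∑ i, v i = 0})

/-- The degree-`p` graded piece `Ā^p(M)` of the projective Orlik-Solomon algebra. -/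
noncomputable def osBarPow (𝕜 : Type) [Field 𝕜] {α : Type} [Fintype α] [LinearOrder α]
    (M : Matroid α) (p : ℕ) : Submodule 𝕜 (OS 𝕜 M) :=
  osPow 𝕜 M p ⊓ (Subalgebra.toSubmodule (osBar 𝕜 M))

noncomputable def osBarLowPow (𝕜 : Type) [Field 𝕜] {α : Type} [Fintype α] [LinearOrder α]
    (M : Matroid α) : ℕ → Submodule 𝕜 (OS 𝕜 M)
  | 0 => ⊥
  | (q + 1) => osBarPow 𝕜 M q

/-- `H^p(Ā(M), ·v) ≠ 0`, i.e. `v ∈ ℛ^p(Ā(M))` (for `v ∈ V̄`). -/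
def osBarResonates (𝕜 : Type) [Field 𝕜] {α : Type} [Fintype α] [LinearOrder α]
    (M : Matroid α) (p : ℕ) (v : α → 𝕜) : Prop :=
  ¬ ((osBarPow 𝕜 M p ⊓ LinearMap.ker (LinearMap.mulRight 𝕜 (osv 𝕜 M v))) ≤
      Submodule.map (LinearMap.mulRight 𝕜 (osv 𝕜 M v)) (osBarLowPow 𝕜 M p))

set_option linter.unusedSectionVars false

section aux

variable (𝕜 : Type) [Field 𝕜] {α : Type} [Fintype α]

open CliffordAlgebra in
lemma aux_ι_mul_comm (m : α → 𝕜) (x : Ex 𝕜 α) :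
    ι 𝕜 m * x = involute x * ι 𝕜 m := by
  induction x using CliffordAlgebra.induction with
  | algebraMap r => rw [AlgHom.commutes CliffordAlgebra.involute r, Algebra.commutes]
  | ι m' =>
      rw [involute_ι, neg_mul]
      exact eq_neg_of_add_eq_zero_left (ι_add_mul_swap m m')
  | mul x y hx hy => rw [← mul_assoc, hx, mul_assoc, hy, map_mul, mul_assoc]
  | add x y hx hy => rw [mul_add, hx, hy, map_add, add_mul]

open CliffordAlgebra in
lemma aux_osd_ι (m : α → 𝕜) : osd 𝕜 (ι 𝕜 m) = algebraMap 𝕜 _ (∑ i, m i) := by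
  rw [osd, contractLeft_ι]
  simp

open CliffordAlgebra in
lemma aux_osd_mul (a b : Ex 𝕜 α) :
    osd 𝕜 (a * b) = osd 𝕜 a * b + involute a * osd 𝕜 b := by
  induction a using CliffordAlgebra.induction generalizing b with
  | algebraMap r =>
      rw [osd, contractLeft_algebraMap_mul, contractLeft_algebraMap, zero_mul, zero_add,
        AlgHom.commutes CliffordAlgebra.involute r]
  | ι m =>
      rw [osd, contractLeft_ι_mul, contractLeft_ι, involute_ι, neg_mul, Algebra.smul_def,
        sub_eq_add_neg]
  | mul x y hx hy =>
      rw [mul_assoc, hx, hy, hx, map_mul]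
      noncomm_ring
  | add x y hx hy =>
      rw [add_mul, map_add, hx, hy, map_add, map_add, add_mul, add_mul]
      abel

noncomputable def Ebar : Subalgebra 𝕜 (Ex 𝕜 α) :=
  Algebra.adjoin 𝕜 ((ι 𝕜) '' {v : α → 𝕜 | ∑ i, v i = 0})

lemma aux_involute_mem {a : Ex 𝕜 α} (ha : a ∈ Ebar 𝕜) :
    CliffordAlgebra.involute a ∈ Ebar 𝕜 := by
  induction ha using Algebra.adjoin_induction with
  | mem x hx =>
      obtain ⟨v, hv, rfl⟩ := hx
      rw [CliffordAlgebra.involute_ι]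
      exact neg_mem (Algebra.subset_adjoin ⟨v, hv, rfl⟩)
  | algebraMap r => rw [AlgHom.commutes CliffordAlgebra.involute r]; exact algebraMap_mem _ r
  | add x y hx hy hx' hy' => rw [map_add]; exact add_mem hx' hy'
  | mul x y hx hy hx' hy' => rw [map_mul]; exact mul_mem hx' hy'

lemma aux_osd_eq_zero {a : Ex 𝕜 α} (ha : a ∈ Ebar 𝕜) : osd 𝕜 a = 0 := by
  induction ha using Algebra.adjoin_induction with
  | mem x hx =>
      obtain ⟨v, hv, rfl⟩ := hx
      rw [aux_osd_ι, hv, map_zero]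
  | algebraMap r => exact CliffordAlgebra.contractLeft_algebraMap _ _ r
  | add x y hx hy hx' hy' => rw [map_add, hx', hy', add_zero]
  | mul x y hx hy hx' hy' => rw [aux_osd_mul, hx', hy', zero_mul, mul_zero, add_zero]


lemma aux_decomp [DecidableEq α] (i0 : α) (a : Ex 𝕜 α) :
    ∃ b c, b ∈ Ebar 𝕜 ∧ c ∈ Ebar 𝕜 ∧ a = b + gen 𝕜 i0 * c := by
  induction a using CliffordAlgebra.induction with
  | algebraMap r =>
      exact ⟨algebraMap 𝕜 _ r, 0, algebraMap_mem _ r, zero_mem _, by rw [mul_zero, add_zero]⟩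
  | ι m =>
      set s : 𝕜 := ∑ i, m i with hs
      set w : α → 𝕜 := m - s • (Pi.single i0 (1:𝕜) : α → 𝕜) with hw
      refine ⟨ι 𝕜 w, algebraMap 𝕜 _ s,
        Algebra.subset_adjoin ⟨_, ?_, rfl⟩, algebraMap_mem _ _, ?_⟩
      · simp [hw, Finset.sum_sub_distrib, ← Finset.mul_sum, Finset.sum_pi_single, hs]
      · have h1 : gen 𝕜 i0 * algebraMap 𝕜 (Ex 𝕜 α) s = s • gen 𝕜 i0 := by
          rw [← Algebra.commutes, ← Algebra.smul_def]
        rw [h1, hw, map_sub, map_smul, gen, sub_add_cancel]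
  | mul x y hx hy =>
      obtain ⟨b, c, hb, hc, rfl⟩ := hx
      obtain ⟨b', c', hb', hc', rfl⟩ := hy
      have he : ∀ z : Ex 𝕜 α, z * gen 𝕜 i0 = gen 𝕜 i0 * CliffordAlgebra.involute z := by
        intro z
        rw [gen, aux_ι_mul_comm 𝕜 _ (CliffordAlgebra.involute z),
          CliffordAlgebra.involute_involute]
      have hee : gen 𝕜 i0 * gen 𝕜 i0 = 0 := ι_sq_zero _
      refine ⟨b * b', c * b' + CliffordAlgebra.involute b * c', mul_mem hb hb',
        add_mem (mul_mem hc hb') (mul_mem (aux_involute_mem 𝕜 hb) hc'), ?_⟩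
      have h1 : b * (gen 𝕜 i0 * c') = gen 𝕜 i0 * (CliffordAlgebra.involute b * c') := by
        rw [← mul_assoc, he, mul_assoc]
      have h2 : (gen 𝕜 i0 * c) * (gen 𝕜 i0 * c') = 0 := by
        rw [mul_assoc, ← mul_assoc c, he, ← mul_assoc, ← mul_assoc, hee, zero_mul, zero_mul]
      rw [add_mul, mul_add, mul_add, h1, h2, add_zero, mul_add, mul_assoc]
      abel
  | add x y hx hy =>
      obtain ⟨b, c, hb, hc, rfl⟩ := hx
      obtain ⟨b', c', hb', hc', rfl⟩ := hy
      exact ⟨b + b', c + c', add_mem hb hb', add_mem hc hc', by rw [mul_add]; abel⟩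

lemma aux_scalar (h : IsEmpty α) (a : Ex 𝕜 α) : ∃ r, a = algebraMap 𝕜 _ r := by
  induction a using CliffordAlgebra.induction with
  | algebraMap r => exact ⟨r, rfl⟩
  | ι m => exact ⟨0, by rw [Subsingleton.elim m 0, map_zero, map_zero]⟩
  | mul x y hx hy =>
      obtain ⟨r, rfl⟩ := hx; obtain ⟨s, rfl⟩ := hy
      exact ⟨r * s, by rw [map_mul]⟩
  | add x y hx hy =>
      obtain ⟨r, rfl⟩ := hx; obtain ⟨s, rfl⟩ := hy
      exact ⟨r + s, by rw [map_add]⟩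

end aux

/-- The projective Orlik-Solomon algebra `Ā(M)` equals the kernel of the derivation
`∂_A` induced on `A(M)` by `∂`. -/
theorem osBar_eq_ker_deriv (𝕜 : Type) [Field 𝕜] {n : ℕ} (M : Matroid (Fin n))
    (hE : M.E = Set.univ)
    (D : OS 𝕜 M →ₗ[𝕜] OS 𝕜 M)
    (hD : ∀ x : Ex 𝕜 (Fin n), D (osπ 𝕜 M x) = osπ 𝕜 M (osd 𝕜 x)) :
    Subalgebra.toSubmodule (osBar 𝕜 M) = LinearMap.ker D := by
  classical
  have hBar : osBar 𝕜 M = (Ebar 𝕜).map (osπ 𝕜 M) := by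
    rw [Ebar, ← Algebra.adjoin_image, Set.image_image, osBar]
    rfl
  apply le_antisymm
  · intro x hx
    rw [Subalgebra.mem_toSubmodule, hBar] at hx
    obtain ⟨a, ha, rfl⟩ := hx
    have h0 := hD a
    rw [aux_osd_eq_zero 𝕜 ha, map_zero] at h0
    exact h0
  · intro x hx
    rw [LinearMap.mem_ker] at hx
    rw [Subalgebra.mem_toSubmodule]
    obtain ⟨a, rfl⟩ := RingQuot.mkAlgHom_surjective 𝕜 (osRel 𝕜 M) x
    change D (osπ 𝕜 M a) = 0 at hx
    change osπ 𝕜 M a ∈ osBar 𝕜 M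
    rw [hD] at hx
    rcases Nat.eq_zero_or_pos n with hn | hn
    · haveI : IsEmpty (Fin n) := by subst hn; infer_instance
      obtain ⟨r, rfl⟩ := aux_scalar 𝕜 this a
      rw [AlgHom.commutes]
      exact algebraMap_mem _ r
    · set i0 : Fin n := ⟨0, hn⟩
      obtain ⟨b, c, hb, hc, rfl⟩ := aux_decomp 𝕜 i0 a
      have hgen : osd 𝕜 (gen 𝕜 i0) = 1 := by
        rw [gen, aux_osd_ι]
        simp [Finset.sum_pi_single]
      have hosd : osd 𝕜 (b + gen 𝕜 i0 * c) = c - gen 𝕜 i0 * osd 𝕜 c := by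
        rw [map_add, aux_osd_eq_zero 𝕜 hb, zero_add, aux_osd_mul, hgen, one_mul,
          show CliffordAlgebra.involute (gen 𝕜 i0) = -gen 𝕜 i0 from
            CliffordAlgebra.involute_ι _,
          neg_mul, ← sub_eq_add_neg]
      rw [hosd, map_sub, sub_eq_zero] at hx
      have key : osπ 𝕜 M (b + gen 𝕜 i0 * c) = osπ 𝕜 M b := by
        rw [map_add, map_mul, hx, ← map_mul, ← mul_assoc,
          show gen 𝕜 i0 * gen 𝕜 i0 = 0 from ι_sq_zero _, zero_mul, map_zero, add_zero]
      rw [key, hBar]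
      exact ⟨b, hb, rfl⟩
end

section
/- Let f : M₁ → M₂ be a complete weak map of matroids. Then the induced algebra homomorphism Λ(f) on exterior algebras maps the Orlik-Solomon ideal I(M₁) into I(M₂), hence induces a well-defined homomorphism of graded 𝕜-algebras A(M₁) → A(M₂). -/
set_option linter.unusedSectionVars false


open ExteriorAlgebra

/-- A weak map `M₁ → M₂`, encoded as a function `S₁ → S₂ ∪ {0}` (with the adjoined
loop `0` represented by `none`; the requirement `f 0 = 0` is built in). -/
def IsWeakMap {α β : Type*} (M₁ : Matroid α) (M₂ : Matroid β) (f : α → Option β) : Prop :=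
  (∀ i ∈ M₁.E, ∀ b, f i = some b → b ∈ M₂.E) ∧
  ∀ I : Set α, I ⊆ M₁.E → Set.InjOn f I → (∀ i ∈ I, f i ≠ none) →
    M₂.Indep {b | ∃ i ∈ I, f i = some b} → M₁.Indep I

/-- A weak map is complete if no circuit of `M₁` meets `f⁻¹(0)` in exactly one element. -/
def IsCompleteWM {α β : Type*} (M₁ : Matroid α) (f : α → Option β) : Prop :=
  ∀ C : Set α, IsCircuit M₁ C → {i ∈ C | f i = none}.ncard ≠ 1

/-- A weak map is non-degenerate if `f⁻¹(0) = {0}`. -/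
def IsNondegWM {α β : Type*} (f : α → Option β) : Prop := ∀ a, f a ≠ none

open scoped Classical in
/-- The linear map `𝕜^{S₁} → 𝕜^{S₂}` induced by a weak map, sending `e_i` to
`e_{f(i)}` when `f i ≠ 0` and to `0` when `f i = 0`. -/
noncomputable def wmLin (𝕜 : Type) [Field 𝕜] {α β : Type} [Fintype α]
    (f : α → Option β) : (α → 𝕜) →ₗ[𝕜] (β → 𝕜) where
  toFun v b := ∑ i ∈ Finset.univ.filter (fun i => f i = some b), v i
  map_add' x y := by funext b; simp [Finset.sum_add_distrib]
  map_smul' c x := by funext b; simp [Finset.mul_sum]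

/-- The Orlik-Solomon ideal `I(M)`: the two-sided ideal of the exterior algebra generated
by the elements `∂ e_C`, for circuits `C` of `M`. -/
noncomputable def osIdeal (𝕜 : Type) [Field 𝕜] {α : Type} [Fintype α] [LinearOrder α]
    (M : Matroid α) : TwoSidedIdeal (Ex 𝕜 α) :=
  TwoSidedIdeal.span {x | ∃ C : Finset α, IsCircuit M (C : Set α) ∧ x = osd 𝕜 (eProd 𝕜 C)}

section OSAux

open ExteriorAlgebra

variable (𝕜 : Type) [Field 𝕜]

/-- Product of generators along a list. -/
noncomputable def lP {α : Type} [DecidableEq α] (l : List α) : Ex 𝕜 α :=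
  (l.map (gen 𝕜)).prod

variable {α : Type} [Fintype α] [LinearOrder α]

@[simp] lemma lP_nil : lP 𝕜 ([] : List α) = 1 := rfl

@[simp] lemma lP_cons (a : α) (l : List α) : lP 𝕜 (a :: l) = gen 𝕜 a * lP 𝕜 l := by
  simp [lP]

lemma lP_append (l₁ l₂ : List α) : lP 𝕜 (l₁ ++ l₂) = lP 𝕜 l₁ * lP 𝕜 l₂ := by
  simp [lP]

lemma eProd_eq_lP (C : Finset α) : eProd 𝕜 C = lP 𝕜 (C.sort (· ≤ ·)) := rfl

lemma gen_anticomm (i j : α) : gen 𝕜 i * gen 𝕜 j = -(gen 𝕜 j * gen 𝕜 i) :=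
  eq_neg_of_add_eq_zero_left (ExteriorAlgebra.ι_add_mul_swap _ _)

lemma gen_sq (i : α) : gen 𝕜 i * gen 𝕜 i = 0 := ExteriorAlgebra.ι_sq_zero _

lemma lP_perm {l l' : List α} (h : l.Perm l') : ∃ s : 𝕜, lP 𝕜 l = s • lP 𝕜 l' := by
  induction h with
  | nil => exact ⟨1, by simp⟩
  | cons a _ ih =>
    obtain ⟨s, hs⟩ := ih
    exact ⟨s, by simp [hs, mul_smul_comm]⟩
  | swap a b l =>
    refine ⟨-1, ?_⟩
    simp only [lP_cons, ← mul_assoc, gen_anticomm 𝕜 b a]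
    simp [mul_assoc]
  | trans _ _ ih1 ih2 =>
    obtain ⟨s, hs⟩ := ih1
    obtain ⟨t, ht⟩ := ih2
    exact ⟨s * t, by rw [hs, ht, smul_smul]⟩

lemma gen_mul_lP {i : α} {l : List α} (h : i ∈ l) : gen 𝕜 i * lP 𝕜 l = 0 := by
  induction l with
  | nil => simp at h
  | cons a t ih =>
    rcases List.mem_cons.1 h with rfl | h
    · rw [lP_cons, ← mul_assoc, gen_sq, zero_mul]
    · rw [lP_cons, ← mul_assoc, gen_anticomm 𝕜 i a, neg_mul, mul_assoc, ih h, mul_zero, neg_zero]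

lemma lP_eq_zero_of_not_nodup {l : List α} (h : ¬ l.Nodup) : lP 𝕜 l = 0 := by
  induction l with
  | nil => exact absurd List.nodup_nil h
  | cons a t ih =>
    rw [List.nodup_cons] at h
    push_neg at h
    by_cases ha : a ∈ t
    · rw [lP_cons, gen_mul_lP 𝕜 ha]
    · rw [lP_cons, ih (h ha), mul_zero]

lemma osd_sum_apply (v : α → 𝕜) :
    (∑ i : α, LinearMap.proj (R := 𝕜) (φ := fun _ : α => 𝕜) i) v = ∑ i, v i := by
  simp

lemma osd_gen_mul (a : α) (x : Ex 𝕜 α) :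
    osd 𝕜 (gen 𝕜 a * x) = x - gen 𝕜 a * osd 𝕜 x := by
  have h := CliffordAlgebra.contractLeft_ι_mul (Q := (0 : QuadraticForm 𝕜 (α → 𝕜)))
    (d := ∑ i, LinearMap.proj i) (Pi.single a (1 : 𝕜)) x
  have h1 : (∑ i : α, LinearMap.proj (R := 𝕜) (φ := fun _ : α => 𝕜) i) (Pi.single a 1) = 1 := by
    rw [osd_sum_apply]
    simp [Pi.single_apply]
  rw [h1, one_smul] at h
  exact h

lemma osd_one : osd 𝕜 (1 : Ex 𝕜 α) = 0 :=
  CliffordAlgebra.contractLeft_one _ _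

lemma osd_lP_mul (l : List α) (y : Ex 𝕜 α) :
    osd 𝕜 (lP 𝕜 l * y) = osd 𝕜 (lP 𝕜 l) * y + ((-1 : 𝕜) ^ l.length) • (lP 𝕜 l * osd 𝕜 y) := by
  induction l with
  | nil => simp [osd_one]
  | cons a t ih =>
    rw [lP_cons, mul_assoc, osd_gen_mul, osd_gen_mul, ih, List.length_cons]
    rw [mul_add, mul_smul_comm, sub_mul, pow_succ]
    simp only [mul_assoc, mul_neg_one, neg_smul]
    abel

lemma smul_mem_tsi {I : TwoSidedIdeal (Ex 𝕜 α)} (s : 𝕜) {x : Ex 𝕜 α} (hx : x ∈ I) :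
    s • x ∈ I := by
  rw [Algebra.smul_def]
  exact I.mul_mem_left _ _ hx

lemma circuit_nonempty {M : Matroid α} {C : Finset α} (hC : IsCircuit M (C : Set α)) :
    C.Nonempty := by
  rcases C.eq_empty_or_nonempty with h | h
  · exfalso
    apply hC.1.1
    rw [h]
    simpa using M.empty_indep
  · exact h

lemma eProd_mem_osIdeal (M : Matroid α) {C : Finset α} (hC : IsCircuit M (C : Set α)) :
    eProd 𝕜 C ∈ osIdeal 𝕜 M := by
  have hne : C.Nonempty := circuit_nonempty hC
  have hcl : C.min' hne ∈ C.sort (· ≤ ·) := (Finset.mem_sort _).2 (C.min'_mem hne)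
  have h0 : gen 𝕜 (C.min' hne) * eProd 𝕜 C = 0 := by
    rw [eProd_eq_lP]; exact gen_mul_lP 𝕜 hcl
  have h := osd_gen_mul 𝕜 (C.min' hne) (eProd 𝕜 C)
  rw [h0, map_zero] at h
  have heq : eProd 𝕜 C = gen 𝕜 (C.min' hne) * osd 𝕜 (eProd 𝕜 C) :=
    sub_eq_zero.mp h.symm
  rw [heq]
  exact (osIdeal 𝕜 M).mul_mem_left _ _ (TwoSidedIdeal.subset_span ⟨C, hC, rfl⟩)

lemma osd_lP_mem (M : Matroid α) {l : List α} (hl : l.Nodup) {C : Finset α}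
    (hC : IsCircuit M (C : Set α)) (hsub : ∀ b ∈ C, b ∈ l) :
    osd 𝕜 (lP 𝕜 l) ∈ osIdeal 𝕜 M := by
  classical
  have hperm : l.Perm (C.sort (· ≤ ·) ++ l.filter (fun b => b ∉ C)) := by
    apply List.perm_of_nodup_nodup_toFinset_eq hl
    · apply List.Nodup.append (Finset.sort_nodup _ _) (hl.filter _)
      intro b hb1 hb2
      have h1 : b ∈ C := (Finset.mem_sort _).1 hb1
      have h2 := List.of_mem_filter hb2
      simp at h2
      exact h2 h1
    · ext b
      simp only [List.mem_toFinset, List.mem_append, List.mem_filter, Finset.mem_sort,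
        decide_eq_true_eq]
      constructor
      · intro hb
        by_cases hbC : b ∈ C
        · exact Or.inl hbC
        · exact Or.inr ⟨hb, hbC⟩
      · rintro (h | h)
        · exact hsub b h
        · exact h.1
  obtain ⟨s, hs⟩ := lP_perm 𝕜 hperm
  rw [hs, map_smul]
  apply smul_mem_tsi
  rw [lP_append, osd_lP_mul]
  refine (osIdeal 𝕜 M).add_mem ?_ ?_
  · rw [← eProd_eq_lP]
    exact (osIdeal 𝕜 M).mul_mem_right _ _ (TwoSidedIdeal.subset_span ⟨C, hC, rfl⟩)
  · apply smul_mem_tsi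
    rw [← eProd_eq_lP]
    exact (osIdeal 𝕜 M).mul_mem_right _ _ (eProd_mem_osIdeal 𝕜 M hC)

lemma dep_has_circuit {β : Type*} (M : Matroid β) (D : Finset β) (hD : M.Dep (D : Set β)) :
    ∃ C : Finset β, (C : Set β) ⊆ (D : Set β) ∧ IsCircuit M (C : Set β) := by
  classical
  induction D using Finset.strongInductionOn with
  | _ D ih =>
    by_cases h : ∀ E ⊂ (D : Set β), ¬ M.Dep E
    · exact ⟨D, subset_rfl, hD, h⟩
    · push_neg at h
      obtain ⟨E, hEss, hEdep⟩ := h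
      have hfin : E.Finite := D.finite_toSet.subset hEss.subset
      have hss : hfin.toFinset ⊂ D := by
        rw [← Finset.coe_ssubset, Set.Finite.coe_toFinset]
        exact hEss
      obtain ⟨C, hsub, hC⟩ := ih hfin.toFinset hss (by rwa [Set.Finite.coe_toFinset])
      exact ⟨C, hsub.trans (by rw [Set.Finite.coe_toFinset]; exact hEss.subset), hC⟩

section TwoVar

variable {β : Type} [Fintype β] [LinearOrder β] {f : α → Option β}

lemma wmLin_single_some {i : α} {b : β} (h : f i = some b) :
    wmLin 𝕜 f (Pi.single i (1 : 𝕜)) = Pi.single b 1 := by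
  classical
  funext b'
  simp only [wmLin, LinearMap.coe_mk, AddHom.coe_mk]
  rw [Finset.sum_congr rfl (fun i' _ => Pi.single_apply i (1 : 𝕜) i'), Finset.sum_ite_eq']
  simp only [Finset.mem_filter, Finset.mem_univ, true_and, h, Option.some_inj, Pi.single_apply]
  by_cases hb : b = b'
  · simp [hb]
  · simp [hb, Ne.symm hb]

lemma wmLin_single_none {i : α} (h : f i = none) :
    wmLin 𝕜 f (Pi.single i (1 : 𝕜)) = 0 := by
  classical
  funext b'
  simp only [wmLin, LinearMap.coe_mk, AddHom.coe_mk, Pi.zero_apply]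
  apply Finset.sum_eq_zero
  intro i' hi'
  simp only [Finset.mem_filter, Finset.mem_univ, true_and] at hi'
  rw [Pi.single_apply, if_neg]
  rintro rfl
  rw [h] at hi'
  cases hi'

lemma mapE_smul (s : 𝕜) (x : Ex 𝕜 α) :
    ExteriorAlgebra.map (wmLin 𝕜 f) (s • x) = s • ExteriorAlgebra.map (wmLin 𝕜 f) x :=
  (ExteriorAlgebra.map (wmLin 𝕜 f)).toLinearMap.map_smul s x

lemma mapE_gen_some {i : α} {b : β} (h : f i = some b) :
    ExteriorAlgebra.map (wmLin 𝕜 f) (gen 𝕜 i) = gen 𝕜 b := by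
  rw [gen, ExteriorAlgebra.map_apply_ι, wmLin_single_some 𝕜 h, gen]

lemma mapE_gen_none {i : α} (h : f i = none) :
    ExteriorAlgebra.map (wmLin 𝕜 f) (gen 𝕜 i) = 0 := by
  rw [gen, ExteriorAlgebra.map_apply_ι, wmLin_single_none 𝕜 h, map_zero]

lemma mapE_osd_comm {l : List α} (h : ∀ i ∈ l, f i ≠ none) :
    ExteriorAlgebra.map (wmLin 𝕜 f) (osd 𝕜 (lP 𝕜 l)) =
      osd 𝕜 (ExteriorAlgebra.map (wmLin 𝕜 f) (lP 𝕜 l)) := by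
  induction l with
  | nil => simp [osd_one]
  | cons a t ih =>
    obtain ⟨b, hb⟩ := Option.ne_none_iff_exists'.1 (h a List.mem_cons_self)
    rw [lP_cons, osd_gen_mul, map_sub, map_mul, map_mul, mapE_gen_some 𝕜 hb,
      ih (fun i hi => h i (List.mem_cons_of_mem a hi)), osd_gen_mul]

lemma mapE_lP {l : List α} {f' : α → β} (h : ∀ i ∈ l, f i = some (f' i)) :
    ExteriorAlgebra.map (wmLin 𝕜 f) (lP 𝕜 l) = lP 𝕜 (l.map f') := by
  induction l with
  | nil => simp
  | cons a t ih =>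
    rw [lP_cons, map_mul, mapE_gen_some 𝕜 (h a List.mem_cons_self),
      ih (fun i hi => h i (List.mem_cons_of_mem a hi)), List.map_cons, lP_cons]

end TwoVar

end OSAux

open ExteriorAlgebra in
lemma mapE_osd_circuit_mem (𝕜 : Type) [Field 𝕜] {α β : Type}
    [Fintype α] [LinearOrder α] [Fintype β] [LinearOrder β]
    (M₁ : Matroid α) (M₂ : Matroid β) (hE₁ : M₁.E = Set.univ) (hE₂ : M₂.E = Set.univ)
    (f : α → Option β) (hf : IsWeakMap M₁ M₂ f) (hfc : IsCompleteWM M₁ f)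
    {C : Finset α} (hC : IsCircuit M₁ (C : Set α)) :
    ExteriorAlgebra.map (wmLin 𝕜 f) (osd 𝕜 (eProd 𝕜 C)) ∈ osIdeal 𝕜 M₂ := by
  classical
  set l := C.sort (· ≤ ·) with hl
  have hmeml : ∀ i, i ∈ l ↔ i ∈ C := fun i => Finset.mem_sort _
  have hcard : (C.filter (fun i => f i = none)).card ≠ 1 := by
    have h := hfc (C : Set α) hC
    rwa [show {i ∈ (C : Set α) | f i = none} = ((C.filter (fun i => f i = none) : Finset α) : Set α)
      from by ext i; simp, Set.ncard_coe_finset] at h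
  by_cases h0 : (C.filter (fun i => f i = none)).card = 0
  · -- no loops in C
    have hnone : ∀ i ∈ C, f i ≠ none := by
      intro i hi hni
      have : i ∈ C.filter (fun i => f i = none) := Finset.mem_filter.2 ⟨hi, hni⟩
      rw [Finset.card_eq_zero.1 h0] at this
      exact absurd this (Finset.notMem_empty i)
    obtain ⟨i₀, hi₀⟩ := circuit_nonempty hC
    obtain ⟨b₀, hb₀⟩ := Option.ne_none_iff_exists'.1 (hnone i₀ hi₀)
    set f' : α → β := fun i => (f i).getD b₀ with hf'
    have hsome : ∀ i ∈ C, f i = some (f' i) := by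
      intro i hi
      obtain ⟨b, hb⟩ := Option.ne_none_iff_exists'.1 (hnone i hi)
      rw [hb, hf']
      simp [hb]
    have hsomel : ∀ i ∈ l, f i = some (f' i) := fun i hi => hsome i ((hmeml i).1 hi)
    rw [eProd_eq_lP, ← hl,
      mapE_osd_comm 𝕜 (fun i hi => hnone i ((hmeml i).1 hi)), mapE_lP 𝕜 hsomel]
    set l' := l.map f' with hl'
    by_cases hnd : l'.Nodup
    · -- f is injective on C; the image is dependent, take a circuit inside it
      have hinj : Set.InjOn f (C : Set α) := by
        intro x hx y hy hxy
        have hx' : x ∈ l := (hmeml x).2 hx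
        have hy' : y ∈ l := (hmeml y).2 hy
        refine List.inj_on_of_nodup_map hnd hx' hy' ?_
        rw [hsome x hx, hsome y hy] at hxy
        exact Option.some_inj.1 hxy
      have himg : {b | ∃ i ∈ (C : Set α), f i = some b} = ((l'.toFinset : Finset β) : Set β) := by
        ext b
        simp only [Set.mem_setOf_eq, Finset.coe_sort_coe, Finset.mem_coe, List.mem_toFinset, hl',
          List.mem_map]
        constructor
        · rintro ⟨i, hi, hfi⟩
          refine ⟨i, (hmeml i).2 hi, ?_⟩
          have := hsome i hi
          rw [this] at hfi
          exact Option.some_inj.1 hfi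
        · rintro ⟨i, hi, rfl⟩
          exact ⟨i, (hmeml i).1 hi, hsome i ((hmeml i).1 hi)⟩
      have hdep : M₂.Dep ((l'.toFinset : Finset β) : Set β) := by
        rw [Matroid.dep_iff]
        refine ⟨fun hind => ?_, by rw [hE₂]; exact Set.subset_univ _⟩
        apply hC.1.1
        apply hf.2 (C : Set α) (by rw [hE₁]; exact Set.subset_univ _) hinj
          (fun i hi => hnone i hi)
        rwa [himg]
      obtain ⟨C', hsub', hC'⟩ := dep_has_circuit M₂ _ hdep
      apply osd_lP_mem 𝕜 M₂ hnd hC'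
      intro b hb
      have : b ∈ l'.toFinset := hsub' hb
      exact List.mem_toFinset.1 this
    · rw [lP_eq_zero_of_not_nodup 𝕜 hnd, map_zero]
      exact TwoSidedIdeal.zero_mem _
  · -- at least two loops in C
    obtain ⟨i, hi, j, hj, hij⟩ := Finset.one_lt_card.1
      (by omega : 1 < (C.filter (fun i => f i = none)).card)
    have hfi : f i = none := (Finset.mem_filter.1 hi).2
    have hfj : f j = none := (Finset.mem_filter.1 hj).2
    have hil : i ∈ l := (hmeml i).2 (Finset.mem_filter.1 hi).1
    have hjl : j ∈ (l.erase i) := (List.mem_erase_of_ne hij.symm).2 ((hmeml j).2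
      (Finset.mem_filter.1 hj).1)
    have hperm : l.Perm (i :: j :: ((l.erase i).erase j)) :=
      (List.perm_cons_erase hil).trans (List.Perm.cons i (List.perm_cons_erase hjl))
    obtain ⟨s, hs⟩ := lP_perm 𝕜 hperm
    rw [eProd_eq_lP, ← hl, hs, map_smul, mapE_smul]
    apply smul_mem_tsi
    rw [lP_cons, lP_cons, osd_gen_mul, osd_gen_mul]
    have hz : ExteriorAlgebra.map (wmLin 𝕜 f)
        (gen 𝕜 j * lP 𝕜 ((l.erase i).erase j) -
          gen 𝕜 i * (lP 𝕜 ((l.erase i).erase j) -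
            gen 𝕜 j * osd 𝕜 (lP 𝕜 ((l.erase i).erase j)))) = 0 := by
      rw [map_sub, map_mul, map_mul, mapE_gen_none 𝕜 hfi, mapE_gen_none 𝕜 hfj]
      simp
    rw [hz]
    exact TwoSidedIdeal.zero_mem _

/-- If `f : M₁ → M₂` is a complete weak map of matroids, then the induced algebra
homomorphism `Λ(f)` on exterior algebras maps the Orlik-Solomon ideal `I(M₁)` into
`I(M₂)`, hence induces a well-defined homomorphism of graded `𝕜`-algebras
`A(M₁) → A(M₂)`. -/
theorem completeWM_inducesOSHom (𝕜 : Type) [Field 𝕜] {α β : Type}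
    [Fintype α] [LinearOrder α] [Fintype β] [LinearOrder β]
    (M₁ : Matroid α) (M₂ : Matroid β) (hE₁ : M₁.E = Set.univ) (hE₂ : M₂.E = Set.univ)
    (f : α → Option β) (hf : IsWeakMap M₁ M₂ f) (hfc : IsCompleteWM M₁ f) :
    (∀ x ∈ osIdeal 𝕜 M₁, ExteriorAlgebra.map (wmLin 𝕜 f) x ∈ osIdeal 𝕜 M₂) ∧
    ∃ g : OS 𝕜 M₁ →ₐ[𝕜] OS 𝕜 M₂,
      ∀ x : Ex 𝕜 α, g (osπ 𝕜 M₁ x) = osπ 𝕜 M₂ (ExteriorAlgebra.map (wmLin 𝕜 f) x) := by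
  classical
  have key : ∀ C : Finset α, IsCircuit M₁ (C : Set α) →
      ExteriorAlgebra.map (wmLin 𝕜 f) (osd 𝕜 (eProd 𝕜 C)) ∈ osIdeal 𝕜 M₂ :=
    fun C hC => mapE_osd_circuit_mem 𝕜 M₁ M₂ hE₁ hE₂ f hf hfc hC
  have part1 : ∀ x ∈ osIdeal 𝕜 M₁, ExteriorAlgebra.map (wmLin 𝕜 f) x ∈ osIdeal 𝕜 M₂ := by
    intro x hx
    have h := TwoSidedIdeal.mem_span_iff.mp hx
      (TwoSidedIdeal.comap (ExteriorAlgebra.map (wmLin 𝕜 f)) (osIdeal 𝕜 M₂))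
    refine (TwoSidedIdeal.mem_comap (ExteriorAlgebra.map (wmLin 𝕜 f))).mp (h ?_)
    rintro _ ⟨C, hC, rfl⟩
    exact (TwoSidedIdeal.mem_comap (ExteriorAlgebra.map (wmLin 𝕜 f))).mpr (key C hC)
  have hπ : ∀ z ∈ osIdeal 𝕜 M₂, osπ 𝕜 M₂ z = 0 := by
    intro z hz
    have h := TwoSidedIdeal.mem_span_iff.mp hz (TwoSidedIdeal.ker (osπ 𝕜 M₂))
    refine (TwoSidedIdeal.mem_ker _).mp (h ?_)
    rintro _ ⟨C, hC, rfl⟩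
    refine (TwoSidedIdeal.mem_ker _).mpr ?_
    have h2 := RingQuot.mkAlgHom_rel 𝕜 (osRel.mk (𝕜 := 𝕜) C hC)
    rw [map_zero] at h2
    exact h2
  refine ⟨part1, ?_⟩
  have hrel : ∀ ⦃x y : Ex 𝕜 α⦄, osRel 𝕜 M₁ x y →
      ((osπ 𝕜 M₂).comp (ExteriorAlgebra.map (wmLin 𝕜 f))) x =
        ((osπ 𝕜 M₂).comp (ExteriorAlgebra.map (wmLin 𝕜 f))) y := by
    rintro _ _ ⟨C, hC⟩
    rw [map_zero]
    exact hπ _ (key C hC)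
  refine ⟨RingQuot.liftAlgHom 𝕜 ⟨(osπ 𝕜 M₂).comp (ExteriorAlgebra.map (wmLin 𝕜 f)), hrel⟩, ?_⟩
  intro x
  exact RingQuot.liftAlgHom_mkAlgHom_apply 𝕜 _ hrel x
end

section
/- If f : M₁ → M₂ is an epimorphism of matroids in the category with complete weak maps as morphisms, then the induced homomorphism A(f) : A(M₁) → A(M₂) of Orlik-Solomon algebras is surjective. -/
open ExteriorAlgebra

/-- Composition of maps `S₁ → S₂ ∪ {0}`, `S₂ → S₃ ∪ {0}` (sending `0 ↦ 0`). -/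
def owComp {α β γ : Type*} (f : α → Option β) (g : β → Option γ) : α → Option γ :=
  fun a => (f a).bind g

/-- `f` is an epimorphism in the category `𝕄` of matroids with complete weak maps as
morphisms. -/
def IsEpiWM {α β : Type*} (M₁ : Matroid α) (M₂ : Matroid β) (f : α → Option β) : Prop :=
  ∀ {γ : Type} (M₃ : Matroid γ) (g h : β → Option γ),
    IsWeakMap M₂ M₃ g → IsCompleteWM M₂ g →
    IsWeakMap M₂ M₃ h → IsCompleteWM M₂ h →
    owComp f g = owComp f h → ∀ b ∈ M₂.E, g b = h b

/-- If `f : M₁ → M₂` is an epimorphism of matroids in the category with complete weak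
maps as morphisms, then the induced homomorphism `A(f) : A(M₁) → A(M₂)` of
Orlik-Solomon algebras is surjective. -/
theorem epiWM_OSHom_surjective (𝕜 : Type) [Field 𝕜] {α β : Type}
    [Fintype α] [LinearOrder α] [Fintype β] [LinearOrder β]
    (M₁ : Matroid α) (M₂ : Matroid β) (hE₁ : M₁.E = Set.univ) (hE₂ : M₂.E = Set.univ)
    (f : α → Option β) (hf : IsWeakMap M₁ M₂ f) (hfc : IsCompleteWM M₁ f)
    (hepi : IsEpiWM M₁ M₂ f)
    (g : OS 𝕜 M₁ →ₐ[𝕜] OS 𝕜 M₂)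
    (hg : ∀ x : Ex 𝕜 α, g (osπ 𝕜 M₁ x) = osπ 𝕜 M₂ (ExteriorAlgebra.map (wmLin 𝕜 f) x)) :
    Function.Surjective ⇑g := by
  classical
  -- Step 1: `f` is surjective onto `β`.
  have hsurj : ∀ b : β, ∃ a, f a = some b := by
    intro b
    by_contra hb
    push_neg at hb
    -- test maps into the loopy matroid on `Bool`
    set M₃ : Matroid Bool := Matroid.loopyOn Set.univ with hM₃
    have hwm : ∀ (u : β → Option Bool), (∀ x, u x ≠ none) → IsWeakMap M₂ M₃ u := by
      intro u hu
      constructor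
      · intro i _ c _
        simp [hM₃]
      · intro I _ _ _ hind
        have : I = ∅ := by
          by_contra hIne
          obtain ⟨i, hi⟩ := Set.nonempty_iff_ne_empty.mpr hIne
          obtain ⟨c, hc⟩ := Option.ne_none_iff_exists'.mp (hu i)
          have : c ∈ {b | ∃ i ∈ I, u i = some b} := ⟨i, hi, hc⟩
          have hne : ({b | ∃ i ∈ I, u i = some b} : Set Bool).Nonempty := ⟨c, this⟩
          rw [hM₃, Matroid.loopyOn_indep_iff] at hind
          rw [hind] at hne
          exact Set.not_nonempty_empty hne
        rw [this]; exact M₂.empty_indep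
    have hcwm : ∀ (u : β → Option Bool), (∀ x, u x ≠ none) → IsCompleteWM M₂ u := by
      intro u hu C _
      have : {i ∈ C | u i = none} = ∅ := by
        ext i; simp only [Set.mem_setOf_eq, Set.mem_empty_iff_false, iff_false, not_and]
        exact fun _ => hu i
      rw [this]
      simp
    set u₁ : β → Option Bool := fun _ => some true with hu₁
    set u₂ : β → Option Bool := fun x => some (decide (x ≠ b)) with hu₂
    have h₁ : ∀ x, u₁ x ≠ none := fun x => by simp [hu₁]
    have h₂ : ∀ x, u₂ x ≠ none := fun x => by simp [hu₂]
    have hcomp : owComp f u₁ = owComp f u₂ := by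
      funext a
      unfold owComp
      cases hfa : f a with
      | none => rfl
      | some c =>
        have : c ≠ b := fun h => hb a (h ▸ hfa)
        simp [hu₁, hu₂, this]
    have := hepi M₃ u₁ u₂ (hwm u₁ h₁) (hcwm u₁ h₁) (hwm u₂ h₂) (hcwm u₂ h₂) hcomp b
      (by rw [hE₂]; trivial)
    simp [hu₁, hu₂] at this
  -- Step 2: each generator `e_b` of `A(M₂)` lies in the range of `g`.
  have key : ∀ b : β, osπ 𝕜 M₂ (ι 𝕜 (Pi.single b (1 : 𝕜))) ∈ g.range := by
    intro b
    obtain ⟨a, ha⟩ := hsurj b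
    refine ⟨osπ 𝕜 M₁ (ι 𝕜 (Pi.single a (1 : 𝕜))), ?_⟩
    show g (osπ 𝕜 M₁ (ι 𝕜 (Pi.single a (1 : 𝕜)))) = _
    rw [hg, ExteriorAlgebra.map_apply_ι]
    have hl : wmLin 𝕜 f (Pi.single a (1 : 𝕜)) = Pi.single b (1 : 𝕜) := by
      funext b'
      simp only [wmLin, LinearMap.coe_mk, AddHom.coe_mk]
      by_cases hbb : b' = b
      · subst hbb
        rw [Finset.sum_eq_single_of_mem a (by simp [ha])
          (fun i _ hia => Pi.single_eq_of_ne hia 1), Pi.single_eq_same, Pi.single_eq_same]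
      · rw [Finset.sum_eq_zero, Pi.single_eq_of_ne hbb]
        intro i hi
        simp only [Finset.mem_filter] at hi
        refine Pi.single_eq_of_ne (fun h => hbb ?_) 1
        rw [h, ha] at hi
        exact (Option.some_injective _ hi.2).symm
    rw [hl]
  -- Step 3: every element of `A(M₂)` is in the range of `g`.
  have key2 : ∀ z : Ex 𝕜 β, osπ 𝕜 M₂ z ∈ g.range := by
    intro z
    induction z using ExteriorAlgebra.induction with
    | algebraMap r =>
      rw [AlgHom.commutes]
      exact ⟨algebraMap 𝕜 _ r, g.commutes r⟩
    | ι v =>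
      have hv : v = ∑ b, (v b) • (Pi.single b (1 : 𝕜) : β → 𝕜) := by
        funext b'
        simp [Pi.single_apply, Finset.sum_ite_eq']
      rw [hv]
      rw [map_sum (ι 𝕜)]
      rw [map_sum]
      refine Submodule.sum_mem g.range.toSubmodule (fun b _ => ?_)
      show osπ 𝕜 M₂ (ι 𝕜 ((v b) • (Pi.single b (1 : 𝕜) : β → 𝕜))) ∈ g.range
      rw [map_smul, map_smul]
      exact Submodule.smul_mem g.range.toSubmodule _ (key b)
    | mul x y hx hy =>
      rw [map_mul]
      exact mul_mem hx hy
    | add x y hx hy =>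
      rw [map_add]
      exact add_mem hx hy
  intro y
  obtain ⟨z, rfl⟩ := RingQuot.mkAlgHom_surjective 𝕜 (osRel 𝕜 M₂) y
  exact key2 z
end

section
/- Let X be a flat of a matroid M on [n], M_X the restriction of M to X, and for v ∈ 𝕜^X (viewed as a coordinate subspace of 𝕜ⁿ), the complex (A(M_X), ·v) is a split subcomplex of (A(M), ·v); consequently ℛᵖ(M_X) ⊆ ℛᵖ(M) ∩ 𝕜^X for all p ≥ 0. -/
open ExteriorAlgebra

open scoped Classical

/-- Extension by zero `𝕜^X → 𝕜^n` of a coordinate subspace. -/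
noncomputable def extByZero (𝕜 : Type) [Field 𝕜] {α : Type} (X : Set α) :
    (↥X → 𝕜) →ₗ[𝕜] (α → 𝕜) where
  toFun w i := if h : i ∈ X then w ⟨i, h⟩ else 0
  map_add' x y := by funext i; by_cases h : i ∈ X <;> simp [h]
  map_smul' c x := by funext i; by_cases h : i ∈ X <;> simp [h]

namespace OSHelp

open ExteriorAlgebra

variable (𝕜 : Type) [Field 𝕜] {n : ℕ} (X : Set (Fin n))

noncomputable def pL : (Fin n → 𝕜) →ₗ[𝕜] (↥X → 𝕜) :=
  LinearMap.funLeft 𝕜 𝕜 (Subtype.val)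

lemma pL_comp_jL : (pL 𝕜 X) ∘ₗ (extByZero 𝕜 X) = LinearMap.id := by
  ext w x
  simp [pL, extByZero, LinearMap.funLeft, x.2]

lemma sum_comp_jL :
    (∑ i : Fin n, LinearMap.proj (R := 𝕜) (φ := fun _ => 𝕜) i) ∘ₗ (extByZero 𝕜 X)
      = ∑ x : ↥X, LinearMap.proj x := by
  refine LinearMap.ext fun w => ?_
  simp only [LinearMap.coe_comp, Function.comp_apply, LinearMap.coe_sum, Finset.sum_apply,
    LinearMap.proj_apply, extByZero, LinearMap.coe_mk, AddHom.coe_mk]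
  rw [show (∑ i : Fin n, if h : i ∈ X then w ⟨i, h⟩ else 0)
      = ∑ i ∈ X.toFinset, (if h : i ∈ X then w ⟨i, h⟩ else 0) from
    (Finset.sum_subset (Finset.subset_univ _)
      (fun i _ hi => dif_neg (by simpa using hi))).symm,
    Finset.sum_subtype (p := (· ∈ X)) X.toFinset (by simp)
      (fun i => if h : i ∈ X then w ⟨i, h⟩ else 0)]
  exact Finset.sum_congr rfl (fun x _ => by rw [dif_pos x.2])

lemma jL_single (x : ↥X) :
    extByZero 𝕜 X (Pi.single x (1 : 𝕜)) = Pi.single (x : Fin n) 1 := by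
  funext i
  by_cases h : i ∈ X
  · simp only [extByZero, LinearMap.coe_mk, AddHom.coe_mk, dif_pos h]
    by_cases hx : (⟨i, h⟩ : ↥X) = x
    · subst hx; simp
    · rw [Pi.single_eq_of_ne hx, Pi.single_eq_of_ne (by rintro rfl; exact hx rfl)]
  · simp only [extByZero, LinearMap.coe_mk, AddHom.coe_mk, dif_neg h]
    rw [Pi.single_eq_of_ne (by rintro rfl; exact h x.2)]

lemma pL_single_notMem {i : Fin n} (hi : i ∉ X) :
    pL 𝕜 X (Pi.single i (1 : 𝕜)) = 0 := by
  funext x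
  simp only [pL, LinearMap.funLeft_apply]
  exact Pi.single_eq_of_ne (by intro h'; exact hi (h' ▸ x.2)) 1

lemma pL_single_mem {i : Fin n} (hi : i ∈ X) :
    pL 𝕜 X (Pi.single i (1 : 𝕜)) = Pi.single (⟨i, hi⟩ : ↥X) 1 := by
  funext x
  simp only [pL, LinearMap.funLeft_apply]
  by_cases hx : x = ⟨i, hi⟩
  · subst hx; simp
  · rw [Pi.single_eq_of_ne (by intro h'; exact hx (Subtype.ext h')),
      Pi.single_eq_of_ne hx]

lemma sort_map' {α β : Type*} [LinearOrder α] [LinearOrder β] (f : α ↪o β) (s : Finset α) :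
    (s.map f.toEmbedding).sort (· ≤ ·) = (s.sort (· ≤ ·)).map f := by
  refine (fun hp h1 h2 => List.Perm.eq_of_pairwise' h1 h2 hp) ?_ (Finset.pairwise_sort _ _) ?_
  · rw [← Multiset.coe_eq_coe, Finset.sort_eq, Finset.map_val, ← Finset.sort_eq s (· ≤ ·),
      Multiset.map_coe]
    rfl
  · exact List.Pairwise.map f (fun a b h => f.monotone h) (Finset.pairwise_sort _ _)

lemma map_prod_gen {α β : Type} (g : (α → 𝕜) →ₗ[𝕜] (β → 𝕜)) (ms : List (α → 𝕜)) :
    ExteriorAlgebra.map g ((ms.map (ι 𝕜)).prod) = (ms.map fun m => ι 𝕜 (g m)).prod := by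
  rw [map_list_prod]; simp [List.map_map, Function.comp_def, map_apply_ι]

set_option synthInstance.maxHeartbeats 1000000 in
lemma contract_map_prod {α β : Type} (f : Module.Dual 𝕜 (β → 𝕜)) (g : (α → 𝕜) →ₗ[𝕜] (β → 𝕜))
    (ms : List (α → 𝕜)) :
    CliffordAlgebra.contractLeft (Q := (0 : QuadraticForm 𝕜 (β → 𝕜))) f
        ((ms.map fun m => ι 𝕜 (g m)).prod) =
      ExteriorAlgebra.map g
        (CliffordAlgebra.contractLeft (Q := (0 : QuadraticForm 𝕜 (α → 𝕜))) (f ∘ₗ g)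
          ((ms.map (ι 𝕜)).prod)) := by
  induction ms with
  | nil => simp [CliffordAlgebra.contractLeft_one]
  | cons m t ih =>
      simp only [List.map_cons, List.prod_cons]
      rw [CliffordAlgebra.contractLeft_ι_mul, CliffordAlgebra.contractLeft_ι_mul,
        map_sub, map_smul, map_mul, map_apply_ι, ih, map_prod_gen]
      rfl

noncomputable def XE : ↥X ↪o Fin n := OrderEmbedding.subtype _

@[simp] lemma XE_apply (x : ↥X) : XE X x = (x : Fin n) := rfl

lemma genList_eq (α : Type) [DecidableEq α] (l : List α) :
    l.map (gen 𝕜) = (l.map (fun i => Pi.single i (1 : 𝕜))).map (ι 𝕜) := by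
  simp [List.map_map, Function.comp_def, gen]

lemma jA_eProd (C₀ : Finset ↥X) :
    ExteriorAlgebra.map (extByZero 𝕜 X) (eProd 𝕜 C₀)
      = eProd 𝕜 (C₀.map (XE X).toEmbedding) := by
  unfold eProd
  rw [sort_map', genList_eq, map_prod_gen, genList_eq]
  simp only [List.map_map, Function.comp_def, jL_single, XE_apply]

lemma jA_osd_eProd (C₀ : Finset ↥X) :
    osd 𝕜 (ExteriorAlgebra.map (extByZero 𝕜 X) (eProd 𝕜 C₀))
      = ExteriorAlgebra.map (extByZero 𝕜 X) (osd 𝕜 (eProd 𝕜 C₀)) := by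
  unfold osd
  conv_lhs => rw [show eProd 𝕜 C₀
      = (((C₀.sort (· ≤ ·)).map (fun i => Pi.single i (1 : 𝕜))).map (ι 𝕜)).prod by
    unfold eProd; rw [genList_eq], map_prod_gen]
  rw [contract_map_prod, sum_comp_jL]
  congr 1
  unfold eProd
  rw [genList_eq]

lemma dep_iff' {M : Matroid (Fin n)} (hE : M.E = Set.univ) {S : Set (Fin n)} :
    M.Dep S ↔ ¬ M.Indep S := by
  rw [Matroid.dep_iff, hE, and_iff_left (Set.subset_univ S)]

lemma restrict_dep_iff (M : Matroid (Fin n)) (hE : M.E = Set.univ) (S : Set ↥X) :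
    (M.restrictSubtype X).Dep S ↔ M.Dep (Subtype.val '' S) := by
  rw [Matroid.dep_iff, Matroid.restrictSubtype_ground, and_iff_left (Set.subset_univ S),
    Matroid.restrictSubtype_indep_iff, dep_iff' hE]

lemma circuit_iff (M : Matroid (Fin n)) (hE : M.E = Set.univ) (S : Set ↥X) :
    IsCircuit (M.restrictSubtype X) S ↔ IsCircuit M (Subtype.val '' S) := by
  constructor
  · rintro ⟨hdep, hmin⟩
    refine ⟨(restrict_dep_iff X M hE S).1 hdep, fun D hD hDdep => ?_⟩
    have hDsub : D ⊆ Subtype.val '' S := hD.subset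
    have hDrange : D ⊆ Set.range (Subtype.val : ↥X → Fin n) :=
      hDsub.trans (by rintro _ ⟨x, _, rfl⟩; exact ⟨x, rfl⟩)
    have hDim : Subtype.val '' (Subtype.val ⁻¹' D : Set ↥X) = D :=
      Set.image_preimage_eq_of_subset hDrange
    have hpre : (Subtype.val ⁻¹' D : Set ↥X) ⊂ S := by
      rw [Set.ssubset_iff_subset_ne] at hD ⊢
      constructor
      · intro x hx
        obtain ⟨y, hy, hxy⟩ := hDsub hx
        rwa [show x = y from Subtype.val_injective hxy.symm]
      · intro hEq
        apply hD.2
        rw [← hDim, hEq]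
    exact hmin _ hpre ((restrict_dep_iff X M hE _).2 (by rwa [hDim]))
  · rintro ⟨hdep, hmin⟩
    refine ⟨(restrict_dep_iff X M hE S).2 hdep, fun D hD hDdep => ?_⟩
    have : Subtype.val '' D ⊂ Subtype.val '' S := by
      rw [Set.ssubset_iff_subset_ne] at hD ⊢
      refine ⟨Set.image_mono hD.1, fun h => hD.2 ?_⟩
      rw [← Set.preimage_image_eq D Subtype.val_injective, h,
        Set.preimage_image_eq S Subtype.val_injective]
    exact hmin _ this ((restrict_dep_iff X M hE D).1 hDdep)

lemma exists_two (M : Matroid (Fin n)) (hE : M.E = Set.univ) (hX : M.IsFlat X)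
    (C : Finset (Fin n)) (hC : IsCircuit M (C : Set (Fin n))) (h : ¬ (C : Set (Fin n)) ⊆ X) :
    ∃ a ∈ C, ∃ b ∈ C, a ≠ b ∧ a ∉ X ∧ b ∉ X := by
  obtain ⟨a, haC, haX⟩ : ∃ a ∈ (C : Set (Fin n)), a ∉ X := Set.not_subset.1 h
  by_contra hcon
  push_neg at hcon
  have hsub : (C : Set (Fin n)) \ {a} ⊆ X := by
    rintro b ⟨hbC, hba⟩
    have hba' : a ≠ b := fun h => hba (by simp [h])
    exact hcon a (Finset.mem_coe.1 haC) b (Finset.mem_coe.1 hbC) hba' haX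
  have hdiff_ss : (C : Set (Fin n)) \ {a} ⊂ C := by
    refine Set.ssubset_iff_of_subset Set.diff_subset |>.2 ⟨a, haC, fun h' => h'.2 rfl⟩
  have hindep : M.Indep ((C : Set (Fin n)) \ {a}) := by
    by_contra hdep
    exact hC.2 _ hdiff_ss ((dep_iff' hE).2 hdep)
  have hnotmem : a ∉ (C : Set (Fin n)) \ {a} := fun h' => h'.2 rfl
  have hins : insert a ((C : Set (Fin n)) \ {a}) = (C : Set (Fin n)) := by
    rw [Set.insert_diff_singleton, Set.insert_eq_of_mem haC]
  have hnotindep : ¬ M.Indep (insert a ((C : Set (Fin n)) \ {a})) := by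
    rw [hins]
    exact ((dep_iff' hE).1 hC.1)
  have hacl : a ∈ M.closure ((C : Set (Fin n)) \ {a}) := by
    by_contra hacl
    exact hnotindep ((hindep.insert_indep_iff_of_notMem hnotmem).2
      ⟨by rw [hE]; trivial, hacl⟩)
  have : a ∈ X := by
    have := M.closure_subset_closure (X := (C : Set (Fin n)) \ {a}) (Y := X) hsub
    rw [hX.closure] at this
    exact this hacl
  exact haX this

lemma pA_prod_zero (l : List (Fin n)) (h : ∃ a ∈ l, a ∉ X) :
    ExteriorAlgebra.map (pL 𝕜 X) ((l.map (gen 𝕜)).prod) = 0 := by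
  induction l with
  | nil => obtain ⟨a, ha, _⟩ := h; exact absurd ha (List.not_mem_nil (a := a))
  | cons m t ih =>
      obtain ⟨a, ha, haX⟩ := h
      simp only [List.map_cons, List.prod_cons, map_mul]
      rcases List.mem_cons.1 ha with rfl | hat
      · rw [show ExteriorAlgebra.map (pL 𝕜 X) (gen 𝕜 a) = 0 by
          rw [gen, map_apply_ι, pL_single_notMem 𝕜 X haX, map_zero], zero_mul]
      · rw [ih ⟨a, hat, haX⟩, mul_zero]

lemma osd_cons (m : Fin n) (t : List (Fin n)) :
    osd 𝕜 (((m :: t).map (gen 𝕜)).prod)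
      = ((t.map (gen 𝕜)).prod) - gen 𝕜 m * osd 𝕜 ((t.map (gen 𝕜)).prod) := by
  simp only [List.map_cons, List.prod_cons, osd, gen]
  rw [CliffordAlgebra.contractLeft_ι_mul]
  congr 1
  rw [show (∑ i : Fin n, LinearMap.proj (R := 𝕜) (φ := fun _ => 𝕜) i) (Pi.single m 1) = 1 by
    simp [Finset.sum_pi_single']]
  rw [one_smul]

set_option synthInstance.maxHeartbeats 1000000 in
lemma pA_osd_prod_zero (l : List (Fin n))
    (h : ∃ a ∈ l, ∃ b ∈ l, a ≠ b ∧ a ∉ X ∧ b ∉ X) :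
    ExteriorAlgebra.map (pL 𝕜 X) (osd 𝕜 ((l.map (gen 𝕜)).prod)) = 0 := by
  induction l with
  | nil => obtain ⟨a, ha, _⟩ := h; exact absurd ha (List.not_mem_nil (a := a))
  | cons m t ih =>
      obtain ⟨a, ha, b, hb, hab, haX, hbX⟩ := h
      rw [osd_cons, map_sub, map_mul]
      by_cases hm : m ∈ X
      · have hat : a ∈ t := by
          rcases List.mem_cons.1 ha with rfl | h' 
          · exact absurd hm haX
          · exact h'
        have hbt : b ∈ t := by
          rcases List.mem_cons.1 hb with rfl | h'
          · exact absurd hm hbX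
          · exact h'
        rw [pA_prod_zero 𝕜 X t ⟨a, hat, haX⟩, ih ⟨a, hat, b, hbt, hab, haX, hbX⟩,
          mul_zero, sub_zero]
      · have hct : ∃ c ∈ t, c ∉ X := by
          rcases List.mem_cons.1 ha with rfl | h'
          · rcases List.mem_cons.1 hb with rfl | h''
            · exact absurd rfl hab
            · exact ⟨b, h'', hbX⟩
          · exact ⟨a, h', haX⟩
        rw [pA_prod_zero 𝕜 X t hct, show ExteriorAlgebra.map (pL 𝕜 X) (gen 𝕜 m) = 0 by
          rw [gen, map_apply_ι, pL_single_notMem 𝕜 X hm, map_zero],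
          zero_mul, sub_zero]

lemma pow_mono {A : Type*} [Semiring A] [Algebra 𝕜 A] {S T : Submodule 𝕜 A} (h : S ≤ T) :
    ∀ p : ℕ, S ^ p ≤ T ^ p
  | 0 => le_rfl
  | (p + 1) => by
      rw [pow_succ, pow_succ]
      exact mul_le_mul' (pow_mono h p) h

lemma osPow_map_le {α β : Type} [Fintype α] [Fintype β] [LinearOrder α] [LinearOrder β]
    (M₁ : Matroid α) (M₂ : Matroid β) (g : (α → 𝕜) →ₗ[𝕜] (β → 𝕜))
    (F : OS 𝕜 M₁ →ₐ[𝕜] OS 𝕜 M₂)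
    (hF : ∀ x, F (osπ 𝕜 M₁ x) = osπ 𝕜 M₂ (ExteriorAlgebra.map g x)) (p : ℕ) :
    Submodule.map F.toLinearMap (osPow 𝕜 M₁ p) ≤ osPow 𝕜 M₂ p := by
  unfold osPow
  rw [← Submodule.map_comp]
  have hcomp : F.toLinearMap ∘ₗ (osπ 𝕜 M₁).toLinearMap
      = (osπ 𝕜 M₂).toLinearMap ∘ₗ (ExteriorAlgebra.map g).toLinearMap :=
    LinearMap.ext fun x => hF x
  rw [hcomp, Submodule.map_comp]
  refine Submodule.map_mono ?_
  rw [Submodule.map_pow]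
  refine pow_mono 𝕜 ?_ p
  rintro _ ⟨_, ⟨m, rfl⟩, rfl⟩
  exact ⟨g m, (map_apply_ι g m).symm⟩

lemma osπ_osd_eProd_eq_zero {α : Type} [Fintype α] [LinearOrder α]
    (M₁ : Matroid α) (C : Finset α) (h : IsCircuit M₁ (C : Set α)) :
    osπ 𝕜 M₁ (osd 𝕜 (eProd 𝕜 C)) = 0 := by
  have h0 := RingQuot.mkAlgHom_rel 𝕜 (osRel.mk (𝕜 := 𝕜) (M := M₁) C h)
  rw [map_zero] at h0
  convert h0 using 5
  rfl

end OSHelp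

/-- Let `X` be a flat of a matroid `M` on `[n]`, and `M_X` the restriction of `M` to
`X`.  For `v ∈ 𝕜^X` (viewed inside `𝕜^n` by extension by zero), the complex
`(A(M_X), ·v)` is a split subcomplex of `(A(M), ·v)`: there are algebra maps
`J : A(M_X) → A(M)` (induced by the inclusion) and `Φ : A(M) → A(M_X)` (induced by the
projection weak map) with `Φ ∘ J = id`, compatible with the differentials.
Consequently `ℛᵖ(M_X) ⊆ ℛᵖ(M) ∩ 𝕜^X` for all `p ≥ 0`. -/
theorem flat_restriction_split (𝕜 : Type) [Field 𝕜] {n : ℕ} (M : Matroid (Fin n))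
    (hE : M.E = Set.univ) (X : Set (Fin n)) (hX : M.IsFlat X) :
    ∃ (J : OS 𝕜 (M.restrictSubtype X) →ₐ[𝕜] OS 𝕜 M)
      (Φ : OS 𝕜 M →ₐ[𝕜] OS 𝕜 (M.restrictSubtype X)),
      (∀ x : Ex 𝕜 (↥X),
        J (osπ 𝕜 (M.restrictSubtype X) x) =
          osπ 𝕜 M (ExteriorAlgebra.map (extByZero 𝕜 X) x)) ∧
      Φ.comp J = AlgHom.id 𝕜 (OS 𝕜 (M.restrictSubtype X)) ∧
      (∀ v : ↥X → 𝕜, Φ (osv 𝕜 M (extByZero 𝕜 X v)) = osv 𝕜 (M.restrictSubtype X) v) ∧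
      (∀ (p : ℕ) (v : ↥X → 𝕜),
        osResonates 𝕜 (M.restrictSubtype X) p v →
          osResonates 𝕜 M p (extByZero 𝕜 X v)) := by
  classical
  have hpj : ∀ x : Ex 𝕜 ↥X,
      ExteriorAlgebra.map (OSHelp.pL 𝕜 X) (ExteriorAlgebra.map (extByZero 𝕜 X) x) = x := by
    intro x
    have h := AlgHom.congr_fun
      (ExteriorAlgebra.map_comp_map (extByZero 𝕜 X) (OSHelp.pL 𝕜 X)) x
    simp only [AlgHom.comp_apply] at h
    rw [h, OSHelp.pL_comp_jL, ExteriorAlgebra.map_id]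
    rfl
  -- the relation proofs
  have relJ : ∀ ⦃x y : Ex 𝕜 ↥X⦄, osRel 𝕜 (M.restrictSubtype X) x y →
      ((osπ 𝕜 M).comp (ExteriorAlgebra.map (extByZero 𝕜 X))) x
        = ((osπ 𝕜 M).comp (ExteriorAlgebra.map (extByZero 𝕜 X))) y := by
    rintro _ _ ⟨C₀, hC₀⟩
    simp only [AlgHom.comp_apply, map_zero]
    have hcirc : IsCircuit M ((C₀.map (OSHelp.XE X).toEmbedding : Finset (Fin n)) :
        Set (Fin n)) := by
      rw [Finset.coe_map]
      exact (OSHelp.circuit_iff X M hE _).1 hC₀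
    have key : osπ 𝕜 M (ExteriorAlgebra.map (extByZero 𝕜 X) (osd 𝕜 (eProd 𝕜 C₀))) = 0 := by
      rw [← OSHelp.jA_osd_eProd 𝕜 X C₀, OSHelp.jA_eProd]
      have h0 := OSHelp.osπ_osd_eProd_eq_zero 𝕜 M _ hcirc
      convert h0 using 5
    convert key using 5
  have relΦ : ∀ ⦃x y : Ex 𝕜 (Fin n)⦄, osRel 𝕜 M x y →
      ((osπ 𝕜 (M.restrictSubtype X)).comp (ExteriorAlgebra.map (OSHelp.pL 𝕜 X))) x
        = ((osπ 𝕜 (M.restrictSubtype X)).comp (ExteriorAlgebra.map (OSHelp.pL 𝕜 X))) y := by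
    rintro _ _ ⟨C, hC⟩
    simp only [AlgHom.comp_apply, map_zero]
    by_cases hCX : (C : Set (Fin n)) ⊆ X
    · set C₀ : Finset ↥X := C.subtype (· ∈ X) with hC₀def
      have hmap : C₀.map (OSHelp.XE X).toEmbedding = C :=
        Finset.subtype_map_of_mem (fun x hx => hCX hx)
      have h1 : eProd 𝕜 C = ExteriorAlgebra.map (extByZero 𝕜 X) (eProd 𝕜 C₀) := by
        rw [OSHelp.jA_eProd, hmap]
      have hset : Subtype.val '' ((C₀ : Set ↥X)) = (C : Set (Fin n)) := by
        ext i
        constructor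
        · rintro ⟨x, hx, rfl⟩
          exact Finset.mem_coe.2 (Finset.mem_subtype.1 (Finset.mem_coe.1 hx))
        · intro hi
          exact ⟨⟨i, hCX hi⟩,
            Finset.mem_coe.2 (Finset.mem_subtype.2 (Finset.mem_coe.1 hi)), rfl⟩
      have hcirc : IsCircuit (M.restrictSubtype X) (C₀ : Set ↥X) := by
        rw [OSHelp.circuit_iff X M hE, hset]
        exact hC
      have key : osπ 𝕜 (M.restrictSubtype X)
          (ExteriorAlgebra.map (OSHelp.pL 𝕜 X) (osd 𝕜 (eProd 𝕜 C))) = 0 := by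
        rw [h1, OSHelp.jA_osd_eProd, hpj]
        have h0 := OSHelp.osπ_osd_eProd_eq_zero 𝕜 (M.restrictSubtype X) C₀ hcirc
        convert h0 using 5
      convert key using 5
    · obtain ⟨a, ha, b, hb, hab, haX, hbX⟩ := OSHelp.exists_two X M hE hX C hC hCX
      have hz : ExteriorAlgebra.map (OSHelp.pL 𝕜 X)
          (osd 𝕜 (((C.sort (· ≤ ·)).map (gen 𝕜)).prod)) = 0 :=
        OSHelp.pA_osd_prod_zero 𝕜 X _
          ⟨a, (Finset.mem_sort _).2 ha, b, (Finset.mem_sort _).2 hb, hab, haX, hbX⟩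
      have key : osπ 𝕜 (M.restrictSubtype X)
          (ExteriorAlgebra.map (OSHelp.pL 𝕜 X) (osd 𝕜 (eProd 𝕜 C))) = 0 := by
        rw [show eProd 𝕜 C = ((C.sort (· ≤ ·)).map (gen 𝕜)).prod from rfl, hz, map_zero]
      convert key using 5
  -- define J and Φ
  set J : OS 𝕜 (M.restrictSubtype X) →ₐ[𝕜] OS 𝕜 M :=
    RingQuot.liftAlgHom 𝕜 ⟨(osπ 𝕜 M).comp (ExteriorAlgebra.map (extByZero 𝕜 X)), relJ⟩ with hJdef
  set Φ : OS 𝕜 M →ₐ[𝕜] OS 𝕜 (M.restrictSubtype X) :=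
    RingQuot.liftAlgHom 𝕜
      ⟨(osπ 𝕜 (M.restrictSubtype X)).comp (ExteriorAlgebra.map (OSHelp.pL 𝕜 X)), relΦ⟩
      with hΦdef
  have hJ : ∀ x : Ex 𝕜 ↥X, J (osπ 𝕜 (M.restrictSubtype X) x)
      = osπ 𝕜 M (ExteriorAlgebra.map (extByZero 𝕜 X) x) := by
    intro x
    exact RingQuot.liftAlgHom_mkAlgHom_apply 𝕜 _ relJ x
  have hΦ : ∀ x : Ex 𝕜 (Fin n), Φ (osπ 𝕜 M x)
      = osπ 𝕜 (M.restrictSubtype X) (ExteriorAlgebra.map (OSHelp.pL 𝕜 X) x) := by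
    intro x
    exact RingQuot.liftAlgHom_mkAlgHom_apply 𝕜 _ relΦ x
  have hΦJ : Φ.comp J = AlgHom.id 𝕜 (OS 𝕜 (M.restrictSubtype X)) := by
    refine AlgHom.ext fun y => ?_
    obtain ⟨x, rfl⟩ := RingQuot.mkAlgHom_surjective 𝕜 _ y
    show Φ (J (osπ 𝕜 (M.restrictSubtype X) x)) = osπ 𝕜 (M.restrictSubtype X) x
    rw [hJ, hΦ, hpj]
  have hJv : ∀ v : ↥X → 𝕜, J (osv 𝕜 (M.restrictSubtype X) v)
      = osv 𝕜 M (extByZero 𝕜 X v) := by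
    intro v
    rw [osv, hJ, map_apply_ι, osv]
  have hΦv : ∀ v : ↥X → 𝕜, Φ (osv 𝕜 M (extByZero 𝕜 X v)) = osv 𝕜 (M.restrictSubtype X) v := by
    intro v
    rw [osv, hΦ, map_apply_ι, osv]
    congr 1
    have h := LinearMap.congr_fun (OSHelp.pL_comp_jL 𝕜 X) v
    simpa using h
  refine ⟨J, Φ, hJ, hΦJ, hΦv, ?_⟩
  intro p v hres hle
  refine hres ?_
  rintro z ⟨hz1, hz2⟩
  have hz2' : z * osv 𝕜 (M.restrictSubtype X) v = 0 := by
    simpa [LinearMap.mulRight_apply] using hz2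
  have hJz1 : J z ∈ osPow 𝕜 M p :=
    OSHelp.osPow_map_le 𝕜 _ _ _ J hJ p ⟨z, hz1, rfl⟩
  have hJz2 : J z * osv 𝕜 M (extByZero 𝕜 X v) = 0 := by
    rw [← hJv v, ← map_mul, hz2', map_zero]
  obtain ⟨w, hw, hwz⟩ := hle ⟨hJz1, by
    simpa [LinearMap.mem_ker, LinearMap.mulRight_apply] using hJz2⟩
  have hΦJz : Φ (J z) = z := AlgHom.congr_fun hΦJ z
  have hzval : z = Φ w * osv 𝕜 (M.restrictSubtype X) v := by
    rw [← hΦJz, ← hwz]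
    simp only [LinearMap.mulRight_apply, map_mul, hΦv]
  cases p with
  | zero =>
      have hw0 : w = 0 := by simpa [osLowPow] using hw
      have : z = 0 := by rw [hzval, hw0, map_zero, zero_mul]
      rw [this]
      exact Submodule.zero_mem _
  | succ q =>
      refine ⟨Φ w, ?_, ?_⟩
      · have hw' : w ∈ osPow 𝕜 M q := by simpa [osLowPow] using hw
        show Φ w ∈ osLowPow 𝕜 (M.restrictSubtype X) (q + 1)
        simpa [osLowPow] using OSHelp.osPow_map_le 𝕜 _ _ _ Φ hΦ q ⟨w, hw', rfl⟩
      · rw [LinearMap.mulRight_apply]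
        exact hzval.symm
end
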